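/- Let k ≥ 2, let λ_1, …, λ_k ∈ ℂ with Re λ_1 < Re λ_2 < … < Re λ_k, let a_1, …, a_k be nonzero complex numbers, and set y(z) = Σ_{j=1}^k a_j e^{λ_j z}. Let φ_0 be the least concave majorant of the points (Re λ_j, ln|a_j|), and for j = 1,…,k−1 set s_j := (φ_0(Re λ_{j+1}) − φ_0(Re λ_j)) / (Re λ_{j+1} − Re λ_j). If u ∈ ℝ satisfies |−u − s_j| > (ln 4)·Θ for every j = 1,…,k−1, then u ∈ G(y,0). -/

import Mathlib

/-- The least concave majorant of the points `(x j, y j)`, `j < k`, on the interval `[a, b]`: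
its value at `μ` is the infimum of `ψ μ` over all functions `ψ : ℝ → ℝ` concave on `[a, b]`
with `ψ (x j) ≥ y j` for all `j < k`. -/
noncomputable def leastConcaveMajorant (a b : ℝ) (k : ℕ) (x y : ℕ → ℝ) (μ : ℝ) : ℝ :=
  sInf {t : ℝ | ∃ ψ : ℝ → ℝ, ConcaveOn ℝ (Set.Icc a b) ψ ∧
    (∀ j < k, y j ≤ ψ (x j)) ∧ t = ψ μ}

lemma geom_aux (n : ℕ) : ∑ d ∈ Finset.range n, (1/4:ℝ)^(d+1) ≤ 1/3 := by
  have heq : ∑ d ∈ Finset.range n, (1/4:ℝ)^(d+1) = (1 - (1/4:ℝ)^n)/3 := by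
    induction n with
    | zero => simp
    | succ m ih => rw [Finset.sum_range_succ, ih]; ring
  rw [heq]
  have : (0:ℝ) ≤ (1/4:ℝ)^n := by positivity
  linarith

lemma concave_three {A B p q r : ℝ} {ψ : ℝ → ℝ} (hψ : ConcaveOn ℝ (Set.Icc A B) ψ)
    (hp : p ∈ Set.Icc A B) (hr : r ∈ Set.Icc A B) (h1 : p ≤ q) (h2 : q ≤ r) (h3 : p < r) :
    (r - q) * ψ p + (q - p) * ψ r ≤ (r - p) * ψ q := by
  have hrp : (0:ℝ) < r - p := by linarith
  have ha : (0:ℝ) ≤ (r - q)/(r - p) := div_nonneg (by linarith) hrp.le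
  have hb : (0:ℝ) ≤ (q - p)/(r - p) := div_nonneg (by linarith) hrp.le
  have hab : (r - q)/(r - p) + (q - p)/(r - p) = 1 := by field_simp; ring
  have hkey := hψ.2 hp hr ha hb hab
  simp only [smul_eq_mul] at hkey
  have hq : (r - q)/(r - p) * p + (q - p)/(r - p) * r = q := by
    field_simp; ring
  rw [hq] at hkey
  rw [div_mul_eq_mul_div, div_mul_eq_mul_div, ← add_div, div_le_iff₀ hrp] at hkey
  nlinarith [hkey]

lemma sumD_le {i k : ℕ} (hik : i < k) :
    ∑ j ∈ (Finset.range k).erase i, (1/4:ℝ)^(if j ≤ i then i - j else j - i) ≤ 2/3 := by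
  have hsplit : (Finset.range k).erase i = Finset.range i ∪ Finset.Ico (i+1) k := by
    ext j
    simp only [Finset.mem_erase, Finset.mem_range, Finset.mem_union, Finset.mem_Ico]
    omega
  have hdisj : Disjoint (Finset.range i) (Finset.Ico (i+1) k) := by
    rw [Finset.disjoint_left]
    intro j hj hj'
    simp only [Finset.mem_range] at hj
    simp only [Finset.mem_Ico] at hj'
    omega
  rw [hsplit, Finset.sum_union hdisj]
  have h1 : ∑ j ∈ Finset.range i, (1/4:ℝ)^(if j ≤ i then i - j else j - i) ≤ 1/3 := by
    have : ∑ j ∈ Finset.range i, (1/4:ℝ)^(if j ≤ i then i - j else j - i)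
        = ∑ j ∈ Finset.range i, (1/4:ℝ)^(i - j) := by
      apply Finset.sum_congr rfl
      intro j hj
      simp only [Finset.mem_range] at hj
      rw [if_pos (by omega)]
    rw [this]
    have hrefl := Finset.sum_range_reflect (fun d => (1/4:ℝ)^(d+1)) i
    have : ∑ j ∈ Finset.range i, (1/4:ℝ)^(i - j) = ∑ j ∈ Finset.range i, (1/4:ℝ)^(j+1) := by
      rw [← hrefl]
      apply Finset.sum_congr rfl
      intro j hj
      simp only [Finset.mem_range] at hj
      congr 1
      omega
    rw [this]
    exact geom_aux i
  have h2 : ∑ j ∈ Finset.Ico (i+1) k, (1/4:ℝ)^(if j ≤ i then i - j else j - i) ≤ 1/3 := by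
    rw [Finset.sum_Ico_eq_sum_range]
    have : ∑ d ∈ Finset.range (k - (i+1)), (1/4:ℝ)^(if i+1+d ≤ i then i - (i+1+d) else i+1+d - i)
        = ∑ d ∈ Finset.range (k - (i+1)), (1/4:ℝ)^(d+1) := by
      apply Finset.sum_congr rfl
      intro d _
      rw [if_neg (by omega)]
      congr 1
      omega
    rw [this]
    exact geom_aux _
  linarith

/-- If `−u` lies outside the `(ln 4)·Θ`-neighbourhood of every slope `s_j` of
the least concave majorant `φ_0` of the points `(Re λ_j, ln|a_j|)`, then `u` lies in the domain
of single-term dominance of `y(z) = Σ_j a_j e^{λ_j z}` on the real line. -/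
theorem stmt_8 (k : ℕ) (hk : 2 ≤ k) (l : ℕ → ℂ)
    (hmono : ∀ j, j + 1 < k → (l j).re < (l (j + 1)).re)
    (a : ℕ → ℂ) (ha : ∀ j < k, a j ≠ 0)
    (Θ : ℝ)
    (hΘ : Θ = (Finset.range (k - 1)).sup' (Finset.nonempty_range_iff.mpr (by omega))
      fun j => ((l (j + 1)).re - (l j).re)⁻¹)
    (u : ℝ)
    (h : ∀ j, j + 1 < k →
      Real.log 4 * Θ <
        |(-u) -
          (leastConcaveMajorant ((l 0).re) ((l (k - 1)).re) k (fun j => (l j).re)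
              (fun j => Real.log ‖a j‖) ((l (j + 1)).re)
           - leastConcaveMajorant ((l 0).re) ((l (k - 1)).re) k (fun j => (l j).re)
              (fun j => Real.log ‖a j‖) ((l j).re))
          / ((l (j + 1)).re - (l j).re)|) :
    ∃ i < k, ∃ ε : ℝ, 0 < ε ∧
      (1 + ε) * ∑ j ∈ (Finset.range k).erase i,
          ‖a j * Complex.exp (l j * (u : ℂ))‖
        ≤ ‖a i * Complex.exp (l i * (u : ℂ))‖ := by
  classical
  set X : ℕ → ℝ := fun j => (l j).re with hX
  set Y : ℕ → ℝ := fun j => Real.log ‖a j‖ with hY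
  set φ : ℝ → ℝ := leastConcaveMajorant (X 0) (X (k-1)) k X Y with hφ
  have hln4 : (0:ℝ) < Real.log 4 := Real.log_pos (by norm_num)
  -- strict monotonicity of X
  have Xmono : ∀ j2, j2 < k → ∀ j1, j1 < j2 → X j1 < X j2 := by
    intro j2 hj2
    induction j2 with
    | zero => omega
    | succ n ih =>
      intro j1 hj1
      have hn : X n < X (n+1) := hmono n hj2
      rcases Nat.lt_succ_iff_lt_or_eq.mp hj1 with h' | h'
      · exact lt_trans (ih (by omega) j1 h') hn
      · rw [h']; exact hn
  have Xmem : ∀ j, j < k → X j ∈ Set.Icc (X 0) (X (k-1)) := by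
    intro j hj
    constructor
    · rcases Nat.eq_zero_or_pos j with h' | h'
      · rw [h']
      · exact (Xmono j hj 0 h').le
    · rcases eq_or_lt_of_le (by omega : j ≤ k - 1) with h' | h'
      · rw [h']
      · exact (Xmono (k-1) (by omega) j h').le
  have hX0k : X 0 < X (k-1) := Xmono (k-1) (by omega) 0 (by omega)
  -- the defining set of φ
  set S : ℝ → Set ℝ := fun μ => {t : ℝ | ∃ ψ : ℝ → ℝ, ConcaveOn ℝ (Set.Icc (X 0) (X (k-1))) ψ ∧
    (∀ j < k, Y j ≤ ψ (X j)) ∧ t = ψ μ} with hS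
  have hφS : ∀ μ, φ μ = sInf (S μ) := fun μ => rfl
  have hne : (Finset.range k).Nonempty := Finset.nonempty_range_iff.mpr (by omega)
  -- nonemptiness
  have hSne : ∀ μ, (S μ).Nonempty := by
    intro μ
    refine ⟨(Finset.range k).sup' hne Y, fun _ => (Finset.range k).sup' hne Y,
      concaveOn_const _ (convex_Icc _ _), fun j hj => ?_, rfl⟩
    exact Finset.le_sup' Y (Finset.mem_range.mpr hj)
  -- bounded below
  have hSbdd : ∀ μ, μ ∈ Set.Icc (X 0) (X (k-1)) → BddBelow (S μ) := by
    intro μ hμ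
    refine ⟨min (Y 0) (Y (k-1)), ?_⟩
    rintro t ⟨ψ, hc, hm, rfl⟩
    have h3 := concave_three hc (Set.left_mem_Icc.mpr hX0k.le) (Set.right_mem_Icc.mpr hX0k.le)
      hμ.1 hμ.2 hX0k
    have hm0 : Y 0 ≤ ψ (X 0) := hm 0 (by omega)
    have hmk : Y (k-1) ≤ ψ (X (k-1)) := hm (k-1) (by omega)
    have h4 : min (Y 0) (Y (k-1)) ≤ Y 0 := min_le_left _ _
    have h5 : min (Y 0) (Y (k-1)) ≤ Y (k-1) := min_le_right _ _
    nlinarith [hμ.1, hμ.2, hX0k]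
  -- lower bound at data points
  have hφlow : ∀ j, j < k → Y j ≤ φ (X j) := by
    intro j hj
    rw [hφS]
    apply le_csInf (hSne _)
    rintro t ⟨ψ, hc, hm, rfl⟩
    exact hm j hj
  -- φ ≤ any concave majorant
  have hφle : ∀ μ, μ ∈ Set.Icc (X 0) (X (k-1)) → ∀ ψ : ℝ → ℝ,
      ConcaveOn ℝ (Set.Icc (X 0) (X (k-1))) ψ → (∀ j < k, Y j ≤ ψ (X j)) → φ μ ≤ ψ μ := by
    intro μ hμ ψ hc hm
    rw [hφS]
    exact csInf_le (hSbdd μ hμ) ⟨ψ, hc, hm, rfl⟩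
  -- three-point concavity of φ at data points
  have phi3 : ∀ j1 j2 j3, j1 < j2 → j2 < j3 → j3 < k →
      (X j3 - X j2) * φ (X j1) + (X j2 - X j1) * φ (X j3) ≤ (X j3 - X j1) * φ (X j2) := by
    intro j1 j2 j3 h12 h23 h3k
    have h13 : X j1 < X j3 := Xmono j3 h3k j1 (by omega)
    have h12' : X j1 < X j2 := Xmono j2 (by omega) j1 h12
    have h23' : X j2 < X j3 := Xmono j3 h3k j2 h23
    have hXne : X j3 - X j1 ≠ 0 := by linarith
    rw [hφS (X j2)]
    rw [show (X j3 - X j2) * φ (X j1) + (X j2 - X j1) * φ (X j3)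
        = (X j3 - X j1) * (((X j3 - X j2) * φ (X j1) + (X j2 - X j1) * φ (X j3)) / (X j3 - X j1))
        by field_simp]
    rw [mul_le_mul_iff_right₀ (by linarith)]
    apply le_csInf (hSne _)
    rintro t ⟨ψ, hc, hm, rfl⟩
    have h3 := concave_three hc (Xmem j1 (by omega)) (Xmem j3 h3k) h12'.le h23'.le h13
    have hle1 : φ (X j1) ≤ ψ (X j1) := hφle _ (Xmem j1 (by omega)) ψ hc hm
    have hle3 : φ (X j3) ≤ ψ (X j3) := hφle _ (Xmem j3 h3k) ψ hc hm
    rw [div_le_iff₀ (by linarith)]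
    nlinarith [h3, hle1, hle3]
  -- slopes
  set s : ℕ → ℝ := fun j => (φ (X (j+1)) - φ (X j)) / (X (j+1) - X j) with hs
  have hgap : ∀ j, j + 1 < k → (0:ℝ) < X (j+1) - X j := by
    intro j hj
    have := hmono j hj
    simp only [hX]
    linarith
  -- adjacent slope monotonicity
  have s_adj : ∀ j, j + 2 < k → s (j+1) ≤ s j := by
    intro j hj
    have h3 := phi3 j (j+1) (j+2) (by omega) (by omega) hj
    have g1 : (0:ℝ) < X (j+1) - X j := hgap j (by omega)
    have g2 : (0:ℝ) < X (j+2) - X (j+1) := hgap (j+1) (by omega)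
    simp only [hs]
    rw [div_le_div_iff₀ (by linarith) (by linarith)]
    have : X (j+1+1) = X (j+2) := by norm_num
    rw [this]
    nlinarith [h3]
  have s_anti : ∀ j1 j2, j1 ≤ j2 → j2 + 1 < k → s j2 ≤ s j1 := by
    intro j1 j2
    induction j2 with
    | zero => intro h1 _; interval_cases j1; rfl
    | succ n ih =>
      intro h1 h2
      rcases Nat.lt_succ_iff_lt_or_eq.mp (Nat.lt_succ_of_le h1) with h' | h'
      · exact le_trans (s_adj n (by omega)) (ih (by omega) (by omega))
      · rw [h']
  -- per-slope gap bound
  have hslope : ∀ j, j + 1 < k → Real.log 4 < |s j + u| * (X (j+1) - X j) := by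
    intro j hj
    have hth := h j hj
    have habs : |(-u) - (φ (X (j+1)) - φ (X j)) / (X (j+1) - X j)| = |s j + u| := by
      rw [show (-u) - (φ (X (j+1)) - φ (X j)) / (X (j+1) - X j) = -(s j + u) by
        simp only [hs]; ring]
      exact abs_neg _
    rw [habs] at hth
    have hg := hgap j hj
    have hΘge : (X (j+1) - X j)⁻¹ ≤ Θ := by
      rw [hΘ]
      exact Finset.le_sup' (fun j => ((l (j + 1)).re - (l j).re)⁻¹)
        (Finset.mem_range.mpr (show j < k - 1 by omega))
    have hinv : (0:ℝ) < (X (j+1) - X j)⁻¹ := by positivity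
    have h1 : Real.log 4 * (X (j+1) - X j)⁻¹ ≤ Real.log 4 * Θ :=
      mul_le_mul_of_nonneg_left hΘge hln4.le
    have h2 : Real.log 4 * (X (j+1) - X j)⁻¹ * (X (j+1) - X j) = Real.log 4 := by
      field_simp
    nlinarith [hth, h1, hg]
  -- values g
  set g : ℕ → ℝ := fun j => φ (X j) + u * X j with hg
  have hgd : ∀ j, j + 1 < k → g (j+1) - g j = (s j + u) * (X (j+1) - X j) := by
    intro j hj
    have hgp := hgap j hj
    simp only [hg, hs]
    field_simp
    ring
  -- chain lemmas
  have up : ∀ (i : ℕ), (∀ t, t + 1 < k → t < i → Real.log 4 ≤ g (t+1) - g t) →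
      ∀ n j, j + n = i → i < k → g j + Real.log 4 * n ≤ g i := by
    intro i hd n
    induction n with
    | zero => intro j hj _; have : j = i := by omega
              rw [this]; simp
    | succ n ih =>
      intro j hj hik
      have h1 : Real.log 4 ≤ g (j+1) - g j := hd j (by omega) (by omega)
      have h2 := ih (j+1) (by omega) hik
      push_cast
      push_cast at h2
      linarith
  have down : ∀ (i : ℕ), (∀ t, t + 1 < k → i ≤ t → g (t+1) - g t ≤ -Real.log 4) →
      ∀ n, i + n < k → g (i+n) + Real.log 4 * n ≤ g i := by
    intro i hd n
    induction n with
    | zero => simp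
    | succ n ih =>
      intro hik
      have h1 : g (i+n+1) - g (i+n) ≤ -Real.log 4 := hd (i+n) (by omega) (by omega)
      have h2 := ih (by omega)
      push_cast
      push_cast at h2
      have : i + (n+1) = i + n + 1 := by omega
      rw [this]
      linarith
  -- sign of slopes
  have hspos : ∀ t, t + 1 < k → ¬(s t + u < 0) → Real.log 4 ≤ g (t+1) - g t := by
    intro t ht hnn
    push_neg at hnn
    have hb := hslope t ht
    have : |s t + u| = s t + u := abs_of_nonneg hnn
    rw [this] at hb
    rw [hgd t ht]
    linarith
  have hsneg : ∀ t, t + 1 < k → s t + u < 0 → g (t+1) - g t ≤ -Real.log 4 := by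
    intro t ht hneg
    have hb := hslope t ht
    have : |s t + u| = -(s t + u) := abs_of_neg hneg
    rw [this] at hb
    rw [hgd t ht]
    nlinarith [hgap t ht]
  -- choose the peak index i
  have main : ∃ i, i < k ∧ ∀ j, j < k →
      g j + Real.log 4 * ((if j ≤ i then i - j else j - i : ℕ) : ℝ) ≤ g i := by
    by_cases hex : ∃ t, t + 1 < k ∧ s t + u < 0
    · set i := Nat.find hex with hi
      obtain ⟨hi1, hi2⟩ := Nat.find_spec hex
      refine ⟨i, by omega, ?_⟩
      intro j hj
      by_cases hji : j ≤ i
      · rw [if_pos hji]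
        have hd : ∀ t, t + 1 < k → t < i → Real.log 4 ≤ g (t+1) - g t := by
          intro t ht hti
          apply hspos t ht
          intro hneg
          exact Nat.find_min hex hti ⟨ht, hneg⟩
        exact up i hd (i - j) j (by omega) (by omega)
      · rw [if_neg hji]
        have hd : ∀ t, t + 1 < k → i ≤ t → g (t+1) - g t ≤ -Real.log 4 := by
          intro t ht hit
          apply hsneg t ht
          have hst : s t ≤ s i := s_anti i t hit ht
          linarith
        have hdown := down i hd (j - i) (by omega)
        have hij : i + (j - i) = j := by omega
        rw [hij] at hdown
        exact hdown
    · push_neg at hex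
      refine ⟨k - 1, by omega, ?_⟩
      intro j hj
      rw [if_pos (by omega)]
      have hd : ∀ t, t + 1 < k → t < k - 1 → Real.log 4 ≤ g (t+1) - g t := by
        intro t ht _
        exact hspos t ht (by have := hex t ht; linarith)
      exact up (k-1) hd (k - 1 - j) j (by omega) (by omega)
  obtain ⟨i, hik, hchain⟩ := main
  -- the values m and the max
  set m : ℕ → ℝ := fun j => Y j + u * X j with hm
  obtain ⟨js, hjs_mem, hjs⟩ := Finset.exists_mem_eq_sup' hne m
  set M := (Finset.range k).sup' hne m with hM
  have hMge : ∀ j, j < k → m j ≤ M := by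
    intro j hj
    exact Finset.le_sup' m (Finset.mem_range.mpr hj)
  -- affine majorant bound : g i ≤ M
  have hgiM : g i ≤ M := by
    have haffc : ConcaveOn ℝ (Set.Icc (X 0) (X (k-1))) (fun μ => -u * μ + M) := by
      refine ⟨convex_Icc _ _, ?_⟩
      intro p _ q _ α β hα hβ hαβ
      simp only [smul_eq_mul]
      apply le_of_eq
      linear_combination M * hαβ
    have haffm : ∀ j < k, Y j ≤ -u * X j + M := by
      intro j hj
      have := hMge j hj
      simp only [hm] at this
      linarith
    have := hφle (X i) (Xmem i hik) _ haffc haffm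
    simp only [hg]
    linarith
  have hmg : ∀ j, j < k → m j ≤ g j := by
    intro j hj
    have := hφlow j hj
    simp only [hm, hg]
    linarith
  -- the max is attained at i
  have hjsk : js < k := Finset.mem_range.mp hjs_mem
  have hjsi : js = i := by
    have h1 := hchain js hjsk
    have h2 := hmg js hjsk
    have h3 : M = m js := hjs
    have h4 : (0:ℝ) ≤ ((if js ≤ i then i - js else js - i : ℕ) : ℝ) := Nat.cast_nonneg _
    have h5 : ((if js ≤ i then i - js else js - i : ℕ) : ℝ) = 0 := by
      by_contra hne0
      have : (0:ℝ) < ((if js ≤ i then i - js else js - i : ℕ) : ℝ) := lt_of_le_of_ne h4 (Ne.symm hne0)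
      nlinarith [hgiM]
    have h6 : (if js ≤ i then i - js else js - i : ℕ) = 0 := by exact_mod_cast h5
    by_cases hji : js ≤ i
    · rw [if_pos hji] at h6; omega
    · rw [if_neg hji] at h6; omega
  -- final bound: m j ≤ m i - log 4 * D j
  have hfin : ∀ j, j < k → m j ≤ m i - Real.log 4 * ((if j ≤ i then i - j else j - i : ℕ) : ℝ) := by
    intro j hj
    have h1 := hchain j hj
    have h2 := hmg j hj
    have h3 : g i ≤ m i := by
      rw [hjsi] at hjs
      rw [← hjs]
      exact hgiM
    linarith
  -- translate |a_j e^{l_j u}| = exp (m j)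
  have habs : ∀ j, j < k → ‖a j * Complex.exp (l j * (u:ℂ))‖ = Real.exp (m j) := by
    intro j hj
    rw [norm_mul, Complex.norm_exp]
    have hre : (l j * (u:ℂ)).re = X j * u := by
      simp [Complex.mul_re, hX]
    rw [hre]
    have hpos : 0 < ‖a j‖ := by
      simp [norm_pos_iff]
      exact ha j hj
    rw [show m j = Y j + u * X j from rfl, Real.exp_add]
    rw [hY]
    simp only
    rw [Real.exp_log hpos]
    ring_nf
  -- conclusion
  refine ⟨i, hik, 1/2, by norm_num, ?_⟩
  have hsum : ∑ j ∈ (Finset.range k).erase i, ‖a j * Complex.exp (l j * (u:ℂ))‖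
      ≤ (2/3) * Real.exp (m i) := by
    have hterm : ∀ j ∈ (Finset.range k).erase i,
        ‖a j * Complex.exp (l j * (u:ℂ))‖
          ≤ (1/4:ℝ)^(if j ≤ i then i - j else j - i) * Real.exp (m i) := by
      intro j hj
      have hjk : j < k := Finset.mem_range.mp (Finset.mem_of_mem_erase hj)
      rw [habs j hjk]
      have := hfin j hjk
      calc Real.exp (m j) ≤ Real.exp (m i - Real.log 4 * ((if j ≤ i then i - j else j - i : ℕ) : ℝ)) :=
            Real.exp_le_exp.mpr this
        _ = (1/4:ℝ)^(if j ≤ i then i - j else j - i) * Real.exp (m i) := by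
            rw [Real.exp_sub]
            rw [show Real.log 4 * ((if j ≤ i then i - j else j - i : ℕ) : ℝ)
              = ((if j ≤ i then i - j else j - i : ℕ) : ℝ) * Real.log 4 by ring]
            rw [Real.exp_nat_mul]
            rw [Real.exp_log (by norm_num : (0:ℝ) < 4)]
            rw [div_eq_mul_inv]
            rw [show ((1:ℝ)/4) = (4:ℝ)⁻¹ by norm_num]
            rw [inv_pow]
            ring
    calc ∑ j ∈ (Finset.range k).erase i, ‖a j * Complex.exp (l j * (u:ℂ))‖
        ≤ ∑ j ∈ (Finset.range k).erase i,
            (1/4:ℝ)^(if j ≤ i then i - j else j - i) * Real.exp (m i) :=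
          Finset.sum_le_sum hterm
      _ = (∑ j ∈ (Finset.range k).erase i, (1/4:ℝ)^(if j ≤ i then i - j else j - i))
            * Real.exp (m i) := by rw [Finset.sum_mul]
      _ ≤ (2/3) * Real.exp (m i) := by
          apply mul_le_mul_of_nonneg_right (sumD_le hik) (Real.exp_nonneg _)
  rw [habs i hik]
  nlinarith [hsum, Real.exp_pos (m i),
    Finset.sum_nonneg (fun j (_ : j ∈ (Finset.range k).erase i) =>
      norm_nonneg (a j * Complex.exp (l j * (u:ℂ))))]
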